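/- Let V be an n-dimensional vector space over ℝ, and let v₁, …, v_d and w₁, …, w_d each be linearly independent families in V such that v₁ ∧ v₂ ∧ … ∧ v_d = c · (w₁ ∧ w₂ ∧ … ∧ w_d) in ⋀^d V for some nonzero scalar c. Then span{v₁, …, v_d} = span{w₁, …, w_d}. Consequently the Plücker map from the Grassmannian of d-planes in V to the projectivization of ⋀^d V is injective. -/

import Mathlib

open ExteriorAlgebra

/-- The wedge product of a linearly independent family is nonzero. -/
lemma iMulti_ne_zero_of_linearIndependent {V : Type*} [AddCommGroup V] [Module ℝ V]
    {m : ℕ} {u : Fin m → V} (hu : LinearIndependent ℝ u) :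
    ExteriorAlgebra.ιMulti ℝ m u ≠ 0 := by
  classical
  have hsub : LinearIndepOn ℝ id (Set.range u) := hu.linearIndepOn_id
  let b : Module.Basis _ ℝ V := Module.Basis.extend hsub
  have hmem : ∀ i, u i ∈ hsub.extend (Set.subset_univ _) := fun i =>
    hsub.subset_extend _ ⟨i, rfl⟩
  let φ : Fin m → (V →ₗ[ℝ] ℝ) := fun i => b.coord ⟨u i, hmem i⟩
  have hφ : ∀ i j, φ i (u j) = if j = i then 1 else 0 := by
    intro i j
    have huj : u j = b ⟨u j, hmem j⟩ := (Module.Basis.extend_apply_self hsub ⟨u j, hmem j⟩).symm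
    rw [huj]
    simp only [φ, Module.Basis.coord_apply, Module.Basis.repr_self]
    rw [Finsupp.single_apply]
    by_cases hij : j = i
    · rw [if_pos hij, if_pos (by rw [hij])]
    · rw [if_neg hij, if_neg]
      intro hval
      exact hij (hu.injective (Subtype.mk_eq_mk.mp hval))
  let f : V [⋀^Fin m]→ₗ[ℝ] ℝ :=
    Matrix.detRowAlternating.compLinearMap (LinearMap.pi φ)
  have hf : f u = 1 := by
    have hmat : (LinearMap.pi φ ∘ u : Fin m → Fin m → ℝ) = (1 : Matrix (Fin m) (Fin m) ℝ) := by
      ext j i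
      simpa [LinearMap.pi_apply, Matrix.one_apply, eq_comm] using hφ i j
    show Matrix.detRowAlternating (LinearMap.pi φ ∘ u) = 1
    rw [hmat]
    exact Matrix.det_one
  intro h0
  have key := ExteriorAlgebra.liftAlternating_apply_ιMulti
    (Function.update (fun i => (0 : V [⋀^Fin i]→ₗ[ℝ] ℝ)) m f) u
  rw [h0, map_zero, Function.update_self, hf] at key
  exact one_ne_zero key.symm

/-- Wedging a vector in the span of a family against that family's wedge gives zero. -/
lemma iota_mul_iMulti_eq_zero {V : Type*} [AddCommGroup V] [Module ℝ V]
    {m : ℕ} (u : Fin m → V) {x : V} (hx : x ∈ Submodule.span ℝ (Set.range u)) :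
    ExteriorAlgebra.ι ℝ x * ExteriorAlgebra.ιMulti ℝ m u = 0 := by
  induction hx using Submodule.span_induction with
  | mem y hy =>
    obtain ⟨i, rfl⟩ := hy
    rw [ExteriorAlgebra.ιMulti_apply]
    exact ExteriorAlgebra.ι_mul_prod_list u i
  | zero => simp
  | add y z _ _ hy hz => rw [map_add, add_mul, hy, hz, add_zero]
  | smul a y _ hy => rw [map_smul, smul_mul_assoc, hy, smul_zero]

lemma span_le_of_wedge_eq_smul_wedge {V : Type*} [AddCommGroup V] [Module ℝ V]
    {d : ℕ} {v w : Fin d → V} (hw : LinearIndependent ℝ w) {c : ℝ} (hc : c ≠ 0)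
    (h : ExteriorAlgebra.ιMulti ℝ d v = c • ExteriorAlgebra.ιMulti ℝ d w) :
    Submodule.span ℝ (Set.range v) ≤ Submodule.span ℝ (Set.range w) := by
  rw [Submodule.span_le]
  rintro x ⟨i, rfl⟩
  by_contra hx
  have hcons : LinearIndependent ℝ (Fin.cons (v i) w : Fin (d + 1) → V) :=
    hw.fin_cons hx
  apply iMulti_ne_zero_of_linearIndependent hcons
  have htail : Matrix.vecTail (Fin.cons (v i) w : Fin (d + 1) → V) = w := by
    ext j; simp [Matrix.vecTail]
  rw [ExteriorAlgebra.ιMulti_succ_apply, Fin.cons_zero, htail]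
  have h0 : ExteriorAlgebra.ι ℝ (v i) * ExteriorAlgebra.ιMulti ℝ d v = 0 :=
    iota_mul_iMulti_eq_zero v (Submodule.subset_span ⟨i, rfl⟩)
  rw [h, mul_smul_comm] at h0
  exact (smul_eq_zero.mp h0).resolve_left hc

/-- Let `V` be an `n`-dimensional real vector space and let `v₁, …, v_d` and `w₁, …, w_d` be
linearly independent families in `V` with `v₁ ∧ ⋯ ∧ v_d = c • (w₁ ∧ ⋯ ∧ w_d)` for some nonzero
scalar `c`.  Then `span{v₁, …, v_d} = span{w₁, …, w_d}`.  Consequently the Plücker map from the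
Grassmannian of `d`-planes in `V` to the projectivization of `⋀^d V` is injective. -/
theorem span_eq_span_of_wedge_eq_smul_wedge {V : Type*} [AddCommGroup V] [Module ℝ V]
    [FiniteDimensional ℝ V] (n d : ℕ) (hn : Module.finrank ℝ V = n)
    (v w : Fin d → V) (hv : LinearIndependent ℝ v) (hw : LinearIndependent ℝ w)
    (c : ℝ) (hc : c ≠ 0)
    (h : ExteriorAlgebra.ιMulti ℝ d v = c • ExteriorAlgebra.ιMulti ℝ d w) :
    Submodule.span ℝ (Set.range v) = Submodule.span ℝ (Set.range w) := by
  refine le_antisymm (span_le_of_wedge_eq_smul_wedge hw hc h) ?_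
  have h' : ExteriorAlgebra.ιMulti ℝ d w = c⁻¹ • ExteriorAlgebra.ιMulti ℝ d v := by
    rw [h, smul_smul, inv_mul_cancel₀ hc, one_smul]
  exact span_le_of_wedge_eq_smul_wedge hv (inv_ne_zero hc) h'
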